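/- If the elements of Q (with largest element q) form a well-based sequence and p_1 < ... < p_a are the elements of {1,...,q} \ Q, then B_n = δ_{n,0} + B_{n-1} + B_{n-q-1} + Σ_{i=1}^a (B_{n-p_i} - B_{n-p_i-1} - δ_{n,p_i}), where B_n counts restricted-overlap tilings of an n-board with squares and combs corresponding to Q, and B_n = 0 for n < 0. -/

import Mathlib

/-- The filled cells (as offsets from the leftmost cell) of the comb corresponding to
a set `Q` with largest element `q`. -/
def combCells (Q : Finset ℕ) (q : ℕ) : Finset ℕ := insert 0 (insert q Q)

/-- A restricted-overlap tiling of an `m`-board with squares and combs corresponding to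
`Q`, recorded by the set `T` of positions of the leftmost cells of the combs. -/
def IsRTiling (Q : Finset ℕ) (q m : ℕ) (T : Finset ℕ) : Prop :=
  (∀ x ∈ T, 1 ≤ x ∧ x + q ≤ m) ∧
  ∀ x ∈ T, ∀ y ∈ T, x < y → y - x ∉ combCells Q q

/-- A set `Q` of positive integers is well-based if `1 ∈ Q` and for every `b ∈ Q` and
every `Δ` with `1 ≤ Δ ≤ b - 1` there is some `a ∈ Q` with `b = a + Δ`. -/
def WellBased (Q : Finset ℕ) : Prop :=
  1 ∈ Q ∧ ∀ b ∈ Q, ∀ d, 1 ≤ d → d < b → ∃ a ∈ Q, b = a + d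

open scoped Classical

namespace CombAux

variable (Q : Finset ℕ) (q : ℕ)

/-- pairwise difference condition -/
def Pw (S : Finset ℕ) : Prop := ∀ x ∈ S, ∀ y ∈ S, x < y → y - x ∉ combCells Q q

noncomputable def aF (k : ℕ) : ℕ :=
  ((Finset.Icc 1 k).powerset.filter (fun S => Pw Q q S)).card

noncomputable def cF (k : ℕ) : ℕ :=
  ((Finset.Icc 1 k).powerset.filter (fun S => k ∈ S ∧ Pw Q q S)).card

variable {Q q}

lemma comb_le (hQ : Q ⊆ Finset.Icc 1 q) {r : ℕ} (hr : r ∈ combCells Q q) : r ≤ q := by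
  simp only [combCells, Finset.mem_insert] at hr
  rcases hr with h | h | h
  · omega
  · omega
  · exact (Finset.mem_Icc.mp (hQ h)).2

lemma notMem_comb (hq : q ∈ Q) {r : ℕ} : r ∉ combCells Q q ↔ r ≠ 0 ∧ r ∉ Q := by
  simp only [combCells, Finset.mem_insert]
  constructor
  · intro h; push_neg at h; exact ⟨h.1, h.2.2⟩
  · rintro ⟨h0, hQ'⟩ (h | h | h)
    · exact h0 h
    · exact hQ' (h ▸ hq)
    · exact hQ' h

lemma wb_add (hwb : WellBased Q) {p d : ℕ} (hp : p ∈ Finset.Icc 1 q \ Q)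
    (hd : d ∈ Finset.Icc 1 q \ Q) : p + d ∉ Q := by
  intro hmem
  simp only [Finset.mem_sdiff, Finset.mem_Icc] at hp hd
  obtain ⟨a, ha, hab⟩ := hwb.2 (p + d) hmem d hd.1.1 (by omega)
  have : a = p := by omega
  exact hp.2 (this ▸ ha)

lemma aF_zero : aF Q q 0 = 1 := by
  simp [aF, Pw, Finset.filter_singleton]

lemma cF_zero : cF Q q 0 = 0 := by
  simp only [cF, Finset.card_eq_zero, Finset.filter_eq_empty_iff]
  intro S hS
  simp only [Finset.Icc_self, Finset.mem_powerset] at hS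
  intro h
  have := hS h.1
  simp at this

lemma aF_split (k : ℕ) : aF Q q k = cF Q q k + aF Q q (k - 1) := by
  rcases Nat.eq_zero_or_pos k with rfl | hk
  · simp [aF_zero, cF_zero]
  unfold aF cF
  rw [← Finset.card_filter_add_card_filter_not
      (p := fun S : Finset ℕ => k ∈ S) (s := (Finset.Icc 1 k).powerset.filter (fun S => Pw Q q S)),
      Finset.filter_filter, Finset.filter_filter]
  have e1 : Finset.filter (fun a => Pw Q q a ∧ k ∈ a) (Finset.Icc 1 k).powerset
      = Finset.filter (fun S => k ∈ S ∧ Pw Q q S) (Finset.Icc 1 k).powerset := by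
    apply Finset.ext; intro S
    simp only [Finset.mem_filter]; tauto
  have e2 : Finset.filter (fun a => Pw Q q a ∧ k ∉ a) (Finset.Icc 1 k).powerset
      = Finset.filter (fun S => Pw Q q S) (Finset.Icc 1 (k - 1)).powerset := by
    apply Finset.ext; intro S
    simp only [Finset.mem_filter, Finset.mem_powerset]
    constructor
    · rintro ⟨hsub, hPw, hk'⟩
      refine ⟨fun y hy => ?_, hPw⟩
      have h1 := Finset.mem_Icc.mp (hsub hy)
      have h2 : y ≠ k := fun h => hk' (h ▸ hy)
      exact Finset.mem_Icc.mpr (by omega)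
    · rintro ⟨hsub, hPw⟩
      refine ⟨fun y hy => ?_, hPw, fun hk' => ?_⟩
      · have h1 := Finset.mem_Icc.mp (hsub hy)
        exact Finset.mem_Icc.mpr (by omega)
      · have := Finset.mem_Icc.mp (hsub hk'); omega
  rw [e1, e2]

lemma cF_rec (hQ : Q ⊆ Finset.Icc 1 q) (hq : q ∈ Q) (hwb : WellBased Q)
    {m : ℕ} (hm : 1 ≤ m) :
    cF Q q m = aF Q q (m - (q + 1)) + ∑ p ∈ Finset.Icc 1 q \ Q, cF Q q (m - p) := by
  set X : Finset (Finset ℕ) :=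
    (Finset.Icc 1 m).powerset.filter (fun S => m ∈ S ∧ Pw Q q S) with hX
  set far : Finset ℕ → Prop := fun S => ∀ y ∈ S, y ≠ m → y + (q + 1) ≤ m with hfar
  set near : ℕ → Finset ℕ → Prop :=
    fun p S => (m - p) ∈ S ∧ ∀ y ∈ S, y ≠ m → y ≤ m - p with hnear
  have hsplit : cF Q q m = (X.filter far).card + (X.filter (fun S => ¬ far S)).card := by
    rw [Finset.card_filter_add_card_filter_not]; rfl
  have hA : (X.filter far).card = aF Q q (m - (q + 1)) := by
    refine Finset.card_nbij' (fun S => S.erase m) (fun S' => insert m S') ?_ ?_ ?_ ?_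
    · intro S hS
      simp only [Finset.mem_coe, hX, hfar, Finset.mem_filter, Finset.mem_powerset] at hS
      obtain ⟨⟨hsub, hmS, hPw⟩, hfarS⟩ := hS
      simp only [Finset.mem_coe, aF, Finset.mem_filter, Finset.mem_powerset]
      refine ⟨fun y hy => ?_, fun x hx y hy hxy => ?_⟩
      · rw [Finset.mem_erase] at hy
        have h1 := Finset.mem_Icc.mp (hsub hy.2)
        have h2 := hfarS y hy.2 hy.1
        exact Finset.mem_Icc.mpr (by omega)
      · exact hPw x (Finset.mem_of_mem_erase hx) y (Finset.mem_of_mem_erase hy) hxy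
    · intro S' hS'
      simp only [Finset.mem_coe, aF, Finset.mem_filter, Finset.mem_powerset] at hS'
      obtain ⟨hsub, hPw⟩ := hS'
      have hbound : ∀ y ∈ S', 1 ≤ y ∧ y + (q + 1) ≤ m := by
        intro y hy; have := Finset.mem_Icc.mp (hsub hy); omega
      simp only [Finset.mem_coe, hX, hfar, Finset.mem_filter, Finset.mem_powerset]
      refine ⟨⟨?_, Finset.mem_insert_self _ _, ?_⟩, ?_⟩
      · intro y hy
        rcases Finset.mem_insert.mp hy with hym | hy'
        · exact Finset.mem_Icc.mpr (by omega)
        · have := hbound y hy'; exact Finset.mem_Icc.mpr (by omega)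
      · intro x hx y hy hxy
        rcases Finset.mem_insert.mp hx with hxm | hx' <;>
          rcases Finset.mem_insert.mp hy with hym | hy'
        · exact absurd hxy (by omega)
        · have := hbound y hy'; exact absurd hxy (by omega)
        · rw [hym]
          intro hmem
          have h1 := comb_le hQ hmem
          have h2 := hbound x hx'
          omega
        · exact hPw x hx' y hy' hxy
      · intro y hy hym
        rcases Finset.mem_insert.mp hy with hym' | hy'
        · exact absurd hym' hym
        · exact (hbound y hy').2
    · intro S hS
      simp only [Finset.mem_coe, hX, Finset.mem_filter] at hS
      show insert m (S.erase m) = S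
      exact Finset.insert_erase hS.1.2.1
    · intro S' hS'
      simp only [Finset.mem_coe, aF, Finset.mem_filter, Finset.mem_powerset] at hS'
      show (insert m S').erase m = S'
      apply Finset.erase_insert
      intro h
      have := Finset.mem_Icc.mp (hS'.1 h); omega
  have hBcard : ∀ p ∈ Finset.Icc 1 q \ Q, (X.filter (near p)).card = cF Q q (m - p) := by
    intro p hp
    have hp' := hp
    simp only [Finset.mem_sdiff, Finset.mem_Icc] at hp'
    obtain ⟨⟨hp1, hpq⟩, hpQ⟩ := hp'
    refine Finset.card_nbij' (fun S => S.erase m) (fun S' => insert m S') ?_ ?_ ?_ ?_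
    · intro S hS
      simp only [Finset.mem_coe, hX, hnear, Finset.mem_filter, Finset.mem_powerset] at hS
      obtain ⟨⟨hsub, hmS, hPw⟩, hmp, hnr⟩ := hS
      have hmp1 : 1 ≤ m - p := (Finset.mem_Icc.mp (hsub hmp)).1
      simp only [Finset.mem_coe, cF, Finset.mem_filter, Finset.mem_powerset]
      refine ⟨fun y hy => ?_, ?_, fun x hx y hy hxy => ?_⟩
      · rw [Finset.mem_erase] at hy
        have h1 := Finset.mem_Icc.mp (hsub hy.2)
        have h2 := hnr y hy.2 hy.1
        exact Finset.mem_Icc.mpr (by omega)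
      · exact Finset.mem_erase.mpr ⟨by omega, hmp⟩
      · exact hPw x (Finset.mem_of_mem_erase hx) y (Finset.mem_of_mem_erase hy) hxy
    · intro S' hS'
      simp only [Finset.mem_coe, cF, Finset.mem_filter, Finset.mem_powerset] at hS'
      obtain ⟨hsub, hmpS, hPw⟩ := hS'
      have hbound : ∀ y ∈ S', 1 ≤ y ∧ y ≤ m - p := by
        intro y hy; exact Finset.mem_Icc.mp (hsub hy)
      have hmp1 : 1 ≤ m - p := (hbound _ hmpS).1
      simp only [Finset.mem_coe, hX, hnear, Finset.mem_filter, Finset.mem_powerset]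
      refine ⟨⟨?_, Finset.mem_insert_self _ _, ?_⟩, Finset.mem_insert_of_mem hmpS, ?_⟩
      · intro y hy
        rcases Finset.mem_insert.mp hy with hym | hy'
        · exact Finset.mem_Icc.mpr (by omega)
        · have := hbound y hy'; exact Finset.mem_Icc.mpr (by omega)
      · intro x hx y hy hxy
        rcases Finset.mem_insert.mp hx with hxm | hx' <;>
          rcases Finset.mem_insert.mp hy with hym | hy'
        · exact absurd hxy (by omega)
        · have := hbound y hy'; exact absurd hxy (by omega)
        · -- x ∈ S', y = m : show m - x ∉ combCells
          rw [hym]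
          have hxb := hbound x hx'
          rcases eq_or_lt_of_le hxb.2 with heq | hlt
          · have hmx : m - x = p := by omega
            rw [hmx, notMem_comb hq]
            exact ⟨by omega, hpQ⟩
          · have hd := hPw x hx' (m - p) hmpS hlt
            rw [notMem_comb hq] at hd
            set d := m - p - x with hdd
            have hmx : m - x = p + d := by omega
            rw [hmx]
            by_cases hle : p + d ≤ q
            · rw [notMem_comb hq]
              refine ⟨by omega, wb_add hwb hp ?_⟩
              simp only [Finset.mem_sdiff, Finset.mem_Icc]
              exact ⟨⟨by omega, by omega⟩, hd.2⟩
            · intro hmem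
              have := comb_le hQ hmem
              omega
        · exact hPw x hx' y hy' hxy
      · intro y hy hym
        rcases Finset.mem_insert.mp hy with hym' | hy'
        · exact absurd hym' hym
        · exact (hbound y hy').2
    · intro S hS
      simp only [Finset.mem_coe, hX, Finset.mem_filter] at hS
      show insert m (S.erase m) = S
      exact Finset.insert_erase hS.1.2.1
    · intro S' hS'
      simp only [Finset.mem_coe, cF, Finset.mem_filter, Finset.mem_powerset] at hS'
      have hmp1 : 1 ≤ m - p := (Finset.mem_Icc.mp (hS'.1 hS'.2.1)).1
      show (insert m S').erase m = S'
      apply Finset.erase_insert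
      intro h
      have := Finset.mem_Icc.mp (hS'.1 h); omega
  have hUnion : X.filter (fun S => ¬ far S)
      = (Finset.Icc 1 q \ Q).biUnion (fun p => X.filter (near p)) := by
    apply Finset.ext
    intro S
    simp only [Finset.mem_biUnion, Finset.mem_filter]
    constructor
    · rintro ⟨hSX, hnf⟩
      have hSX' := hSX
      simp only [hX, Finset.mem_filter, Finset.mem_powerset] at hSX'
      obtain ⟨hsub, hmS, hPw⟩ := hSX'
      simp only [hfar] at hnf
      push_neg at hnf
      obtain ⟨y0, hy0S, hy0m, hy0⟩ := hnf
      have hne : (S.erase m).Nonempty := ⟨y0, Finset.mem_erase.mpr ⟨hy0m, hy0S⟩⟩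
      set y1 := (S.erase m).max' hne with hy1
      have hy1m : y1 ∈ S.erase m := Finset.max'_mem _ hne
      rw [Finset.mem_erase] at hy1m
      have hy1le := Finset.mem_Icc.mp (hsub hy1m.2)
      have hy1lt : y1 < m := by omega
      have hy0le : y0 ≤ y1 := Finset.le_max' _ y0 (Finset.mem_erase.mpr ⟨hy0m, hy0S⟩)
      have hcomb := hPw y1 hy1m.2 m hmS hy1lt
      rw [notMem_comb hq] at hcomb
      refine ⟨m - y1, ?_, hSX, ?_, ?_⟩
      · simp only [Finset.mem_sdiff, Finset.mem_Icc]
        exact ⟨⟨by omega, by omega⟩, hcomb.2⟩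
      · have : m - (m - y1) = y1 := by omega
        rw [this]; exact hy1m.2
      · intro y hy hym
        have : m - (m - y1) = y1 := by omega
        rw [this]
        exact Finset.le_max' _ y (Finset.mem_erase.mpr ⟨hym, hy⟩)
    · rintro ⟨p, hp, hSX, hmpS, hnr⟩
      refine ⟨hSX, ?_⟩
      simp only [Finset.mem_sdiff, Finset.mem_Icc] at hp
      have hSX' := hSX
      simp only [hX, Finset.mem_filter, Finset.mem_powerset] at hSX'
      have hmp1 := (Finset.mem_Icc.mp (hSX'.1 hmpS)).1
      simp only [hfar]
      push_neg
      exact ⟨m - p, hmpS, by omega, by omega⟩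
  have hdisj : ∀ p₁ ∈ Finset.Icc 1 q \ Q, ∀ p₂ ∈ Finset.Icc 1 q \ Q, p₁ ≠ p₂ →
      Disjoint (X.filter (near p₁)) (X.filter (near p₂)) := by
    intro p₁ hp₁ p₂ hp₂ hne
    rw [Finset.disjoint_left]
    intro S hS₁ hS₂
    simp only [hX, hnear, Finset.mem_filter, Finset.mem_powerset] at hS₁ hS₂
    obtain ⟨⟨hsub, -, -⟩, h1, h1'⟩ := hS₁
    obtain ⟨-, h2, h2'⟩ := hS₂
    have e1 := Finset.mem_Icc.mp (hsub h1)
    have e2 := Finset.mem_Icc.mp (hsub h2)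
    simp only [Finset.mem_sdiff, Finset.mem_Icc] at hp₁ hp₂
    have g1 := h1' (m - p₂) h2 (by omega)
    have g2 := h2' (m - p₁) h1 (by omega)
    omega
  rw [hsplit, hA, hUnion, Finset.card_biUnion hdisj, Finset.sum_congr rfl hBcard]

/-- Bridge from tilings to aF. -/
lemma bridge (hQ : Q ⊆ Finset.Icc 1 q) (N : ℕ) :
    ((Finset.Icc 1 N).powerset.filter (fun T => IsRTiling Q q N T)).card = aF Q q (N - q) := by
  unfold aF
  congr 1
  apply Finset.ext
  intro T
  rw [Finset.mem_filter, Finset.mem_filter, Finset.mem_powerset, Finset.mem_powerset]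
  simp only [IsRTiling]
  constructor
  · rintro ⟨hsub, hbd, hPw⟩
    refine ⟨fun y hy => ?_, hPw⟩
    have := hbd y hy
    exact Finset.mem_Icc.mpr (by omega)
  · rintro ⟨hsub, hPw⟩
    have hbd : ∀ x ∈ T, 1 ≤ x ∧ x + q ≤ N := by
      intro x hx
      have := Finset.mem_Icc.mp (hsub hx)
      omega
    refine ⟨fun y hy => ?_, hbd, hPw⟩
    have := hbd y hy
    exact Finset.mem_Icc.mpr (by omega)

end CombAux

open scoped Classical in
/-- If the elements of `Q` (largest element `q`) form a well-based sequence and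
`p_1 < ... < p_a` are the elements of `{1,...,q} \ Q`, then the number `B n` of
restricted-overlap tilings of an `n`-board with squares and combs corresponding to `Q`
(with `B n = 0` for `n < 0`) satisfies
`B n = δ_{n,0} + B_{n-1} + B_{n-q-1} + Σ_{i=1}^a (B_{n-p_i} - B_{n-p_i-1} - δ_{n,p_i})`. -/
theorem stmt_11 (q : ℕ) (Q : Finset ℕ) (hQ : Q ⊆ Finset.Icc 1 q) (hq : q ∈ Q)
    (hwb : WellBased Q) (B : ℤ → ℤ)
    (hBneg : ∀ n : ℤ, n < 0 → B n = 0)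
    (hB : ∀ n : ℕ, B n =
      ((Finset.Icc 1 n).powerset.filter (fun T => IsRTiling Q q n T)).card) :
    ∀ n : ℤ, B n = (if n = 0 then 1 else 0) + B (n - 1) + B (n - q - 1)
      + ∑ p ∈ Finset.Icc 1 q \ Q,
          (B (n - p) - B (n - p - 1) - if n = (p : ℤ) then 1 else 0) := by
  have hq1 : 1 ≤ q := (Finset.mem_Icc.mp (hQ hq)).1
  have h1Q : 1 ∈ Q := hwb.1
  have hBa : ∀ k : ℕ, B k = (CombAux.aF Q q (k - q) : ℤ) := by
    intro k
    rw [hB k, CombAux.bridge hQ]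
  intro n
  by_cases hn : n < 0
  · have hs : ∑ p ∈ Finset.Icc 1 q \ Q,
        (B (n - p) - B (n - p - 1) - if n = (p : ℤ) then 1 else 0) = 0 := by
      apply Finset.sum_eq_zero
      intro p hp
      have hp1 : 1 ≤ p := (Finset.mem_Icc.mp (Finset.mem_sdiff.mp hp).1).1
      rw [hBneg _ (by omega), hBneg _ (by omega), if_neg (by omega)]
      ring
    rw [hBneg n hn, hBneg _ (by omega), hBneg _ (by omega), if_neg (by omega), hs]
    ring
  push_neg at hn
  lift n to ℕ using hn with N
  by_cases hNq : N ≤ q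
  · -- small case : B N = 1
    have hL : B (N : ℤ) = 1 := by
      rw [hBa N, show N - q = 0 from by omega, CombAux.aF_zero]; norm_num
    have hs : ∑ p ∈ Finset.Icc 1 q \ Q,
        (B ((N : ℤ) - p) - B ((N : ℤ) - p - 1) - if (N : ℤ) = (p : ℤ) then 1 else 0) = 0 := by
      apply Finset.sum_eq_zero
      intro p hp
      obtain ⟨hpIcc, hpQ⟩ := Finset.mem_sdiff.mp hp
      obtain ⟨hp1, hpq⟩ := Finset.mem_Icc.mp hpIcc
      have hp2 : 2 ≤ p := by
        by_contra h
        have : p = 1 := by omega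
        exact hpQ (this ▸ h1Q)
      rcases lt_trichotomy p N with hlt | heq | hgt
      · have e1 : (N : ℤ) - p = ((N - p : ℕ) : ℤ) := by omega
        have e2 : ((N - p : ℕ) : ℤ) - 1 = ((N - p - 1 : ℕ) : ℤ) := by omega
        rw [e1, e2, hBa, hBa, show N - p - q = 0 from by omega,
          show N - p - 1 - q = 0 from by omega, CombAux.aF_zero, if_neg (by omega)]
        ring
      · have e1 : (N : ℤ) - p = ((0 : ℕ) : ℤ) := by omega
        rw [e1, hBa, hBneg _ (by omega), if_pos (by omega),
          show 0 - q = 0 from by omega, CombAux.aF_zero]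
        ring
      · rw [hBneg _ (by omega), hBneg _ (by omega), if_neg (by omega)]
        ring
    rw [hL, hs, hBneg ((N : ℤ) - q - 1) (by omega)]
    rcases Nat.eq_zero_or_pos N with rfl | hN1
    · rw [if_pos (by norm_num), hBneg _ (by omega)]
      ring
    · have e1 : (N : ℤ) - 1 = ((N - 1 : ℕ) : ℤ) := by omega
      rw [if_neg (by omega), e1, hBa, show N - 1 - q = 0 from by omega, CombAux.aF_zero]
      norm_num
  · -- large case : N = q + m with 1 ≤ m
    obtain ⟨m, hNm, hm⟩ : ∃ m : ℕ, N = q + m ∧ 1 ≤ m := ⟨N - q, by omega, by omega⟩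
    subst hNm
    have hterm : ∀ p ∈ Finset.Icc 1 q \ Q,
        B (((q + m : ℕ) : ℤ) - p) - B (((q + m : ℕ) : ℤ) - p - 1)
          - (if ((q + m : ℕ) : ℤ) = (p : ℤ) then 1 else 0)
        = (CombAux.cF Q q (m - p) : ℤ) := by
      intro p hp
      obtain ⟨hpIcc, hpQ⟩ := Finset.mem_sdiff.mp hp
      obtain ⟨hp1, hpq⟩ := Finset.mem_Icc.mp hpIcc
      have e1 : ((q + m : ℕ) : ℤ) - p = ((q + m - p : ℕ) : ℤ) := by omega
      have e2 : ((q + m - p : ℕ) : ℤ) - 1 = ((q + m - p - 1 : ℕ) : ℤ) := by omega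
      rw [e1, e2, hBa, hBa, if_neg (by omega),
        show q + m - p - q = m - p from by omega,
        show q + m - p - 1 - q = m - p - 1 from by omega]
      have := CombAux.aF_split (Q := Q) (q := q) (m - p)
      omega
    rw [Finset.sum_congr rfl hterm]
    have e0 : ((q + m : ℕ) : ℤ) - 1 = ((q + m - 1 : ℕ) : ℤ) := by omega
    have e2 : ((q + m : ℕ) : ℤ) - q - 1 = ((m - 1 : ℕ) : ℤ) := by omega
    rw [hBa, e0, hBa, e2, hBa, if_neg (by omega),
      show q + m - q = m from by omega,
      show q + m - 1 - q = m - 1 from by omega,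
      show m - 1 - q = m - (q + 1) from by omega,
      ← Nat.cast_sum]
    have h1 := CombAux.aF_split (Q := Q) (q := q) m
    have h2 := CombAux.cF_rec hQ hq hwb hm
    omega
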